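/- Let k > 0 and a > 0 be real numbers, and let R_k be the Litim regulator. Then ∫_{ℝ} dω / (ω² + a + R_k(ω)) = 2k/(k² + a) + (π − 2·arctan(k/√a))/√a. -/

import Mathlib

open MeasureTheory Real Set Filter

/-- The Litim regulator at scale `k`: `R_k(ω) = (k² − ω²)·θ(k² − ω²)`. -/
noncomputable def litim (k ω : ℝ) : ℝ := if ω ^ 2 < k ^ 2 then k ^ 2 - ω ^ 2 else 0

section Aux

variable {k a : ℝ}

lemma aux_hasDerivAt (ha : 0 < a) (x : ℝ) :
    HasDerivAt (fun x : ℝ => arctan (x / Real.sqrt a) / Real.sqrt a) (1 / (x ^ 2 + a)) x := by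
  have hs : 0 < Real.sqrt a := Real.sqrt_pos.mpr ha
  have hs2 : Real.sqrt a ^ 2 = a := Real.sq_sqrt ha.le
  have h1 : HasDerivAt (fun x : ℝ => x / Real.sqrt a) (1 / Real.sqrt a) x := by
    simpa using (hasDerivAt_id x).div_const (Real.sqrt a)
  have h2 := ((Real.hasDerivAt_arctan (x / Real.sqrt a)).comp x h1).div_const (Real.sqrt a)
  refine h2.congr_deriv ?_
  have hne : (1 : ℝ) + (x / Real.sqrt a) ^ 2 ≠ 0 := by positivity
  have hne2 : x ^ 2 + a ≠ 0 := by positivity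
  field_simp
  nlinarith [hs2, sq_nonneg x]

lemma aux_tendsto (ha : 0 < a) :
    Tendsto (fun x : ℝ => arctan (x / Real.sqrt a) / Real.sqrt a) atTop
      (nhds (π / 2 / Real.sqrt a)) := by
  have hs : 0 < Real.sqrt a := Real.sqrt_pos.mpr ha
  have h1 : Tendsto (fun x : ℝ => x / Real.sqrt a) atTop atTop :=
    tendsto_id.atTop_div_const hs
  exact (((tendsto_nhds_of_tendsto_nhdsWithin Real.tendsto_arctan_atTop).comp h1).div_const _)

lemma aux_integrableOn (ha : 0 < a) (k : ℝ) :
    IntegrableOn (fun x : ℝ => 1 / (x ^ 2 + a)) (Ioi k) := by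
  refine integrableOn_Ioi_deriv_of_nonneg' (fun x _ => aux_hasDerivAt ha x)
    (fun x _ => by positivity) (aux_tendsto ha)

lemma aux_integral_Ioi (ha : 0 < a) (k : ℝ) :
    ∫ x in Ioi k, 1 / (x ^ 2 + a) = (π / 2 - arctan (k / Real.sqrt a)) / Real.sqrt a := by
  rw [integral_Ioi_of_hasDerivAt_of_nonneg' (fun x _ => aux_hasDerivAt ha x)
    (fun x _ => by positivity) (aux_tendsto ha)]
  rw [div_sub_div_same]

end Aux

/-- Integral of the Litim-regularized propagator:
`∫ dω / (ω² + a + R_k(ω)) = 2k/(k² + a) + (π − 2 arctan(k/√a))/√a`. -/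
theorem integral_litim_propagator (k a : ℝ) (hk : 0 < k) (ha : 0 < a) :
    ∫ ω : ℝ, 1 / (ω ^ 2 + a + litim k ω) =
      2 * k / (k ^ 2 + a) + (π - 2 * arctan (k / Real.sqrt a)) / Real.sqrt a := by
  have hs : 0 < Real.sqrt a := Real.sqrt_pos.mpr ha
  have hka : (0:ℝ) < k ^ 2 + a := by positivity
  -- the integrand is even
  have habs : (∫ ω : ℝ, 1 / (ω ^ 2 + a + litim k ω)) =
      ∫ ω : ℝ, (fun t : ℝ => 1 / (t ^ 2 + a + litim k t)) |ω| := by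
    congr 1; ext ω; simp only [litim, sq_abs]
  rw [habs, integral_comp_abs (f := fun t : ℝ => 1 / (t ^ 2 + a + litim k t))]
  -- equality on the two pieces
  have hEqIoc : EqOn (fun t : ℝ => 1 / (t ^ 2 + a + litim k t))
      (fun _ : ℝ => 1 / (k ^ 2 + a)) (Ioc 0 k) := by
    intro ω hω
    simp only [litim]
    split_ifs with h
    · ring_nf
    · have h1 : ω ^ 2 = k ^ 2 := by nlinarith [hω.1, hω.2]
      simp [h1]
  have hEqIoi : EqOn (fun t : ℝ => 1 / (t ^ 2 + a + litim k t))
      (fun t : ℝ => 1 / (t ^ 2 + a)) (Ioi k) := by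
    intro ω hω
    have : ¬ ω ^ 2 < k ^ 2 := by
      have : k < ω := hω
      nlinarith
    simp [litim, this]
  have hint1 : IntegrableOn (fun t : ℝ => 1 / (t ^ 2 + a + litim k t)) (Ioc 0 k) := by
    exact (integrableOn_const measure_Ioc_lt_top.ne).congr_fun
      hEqIoc.symm measurableSet_Ioc
  have hint2 : IntegrableOn (fun t : ℝ => 1 / (t ^ 2 + a + litim k t)) (Ioi k) :=
    (aux_integrableOn ha k).congr_fun hEqIoi.symm measurableSet_Ioi
  have hsplit : (∫ ω in Ioi (0:ℝ), 1 / (ω ^ 2 + a + litim k ω)) =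
      (∫ ω in Ioc (0:ℝ) k, 1 / (ω ^ 2 + a + litim k ω)) +
      ∫ ω in Ioi k, 1 / (ω ^ 2 + a + litim k ω) := by
    rw [← Ioc_union_Ioi_eq_Ioi hk.le,
      setIntegral_union (Ioc_disjoint_Ioi le_rfl) measurableSet_Ioi hint1 hint2]
  rw [hsplit]
  have hIoc : (∫ ω in Ioc (0:ℝ) k, 1 / (ω ^ 2 + a + litim k ω)) = k * (1 / (k ^ 2 + a)) := by
    rw [setIntegral_congr_fun measurableSet_Ioc hEqIoc, setIntegral_const, measureReal_def, Real.volume_Ioc,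
      smul_eq_mul, sub_zero, ENNReal.toReal_ofReal hk.le]
  have hIoi : (∫ ω in Ioi k, 1 / (ω ^ 2 + a + litim k ω)) =
      (π / 2 - arctan (k / Real.sqrt a)) / Real.sqrt a := by
    rw [setIntegral_congr_fun measurableSet_Ioi hEqIoi, aux_integral_Ioi ha k]
  rw [hIoc, hIoi]
  field_simp
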